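/- Let α be irrational with denominators (q_n) and suppose q_{n+1}/q_n > 4/η³ for some 0 < η < 1/50. Set δ = η²/q_n and let I = [−η³/q_n, −2/q_{n+1}] ⊂ 𝕋. Then for every x ∈ I, the set of integers i ∈ {−q_n, …, 2q_n} with iα ∈ (x, x + δ) is exactly {−q_n, 0, q_n, 2q_n}. -/

import Mathlib

noncomputable def cdist (x : ℝ) : ℝ := ‖(x : AddCircle (1:ℝ))‖

/-- Iterates of the Gauss map applied to the fractional part of `α`. -/
noncomputable def gaussIter (α : ℝ) : ℕ → ℝ
  | 0 => Int.fract α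
  | n+1 => Int.fract (gaussIter α n)⁻¹

/-- Partial quotients of the continued fraction expansion of `α` (`cfA α n` is `a_n`). -/
noncomputable def cfA (α : ℝ) : ℕ → ℕ
  | 0 => 0
  | n+1 => (⌊(gaussIter α n)⁻¹⌋).toNat

/-- Denominators of the continued fraction expansion of `α`. -/
noncomputable def cfQ (α : ℝ) : ℕ → ℕ
  | 0 => 1
  | 1 => cfA α 1
  | n+2 => cfA α (n+2) * cfQ α (n+1) + cfQ α n


/-- The open arc from `a` to `b` on the circle. -/
def arcO (a b : AddCircle (1:ℝ)) : Set (AddCircle (1:ℝ)) :=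
  {z | ‖z - a‖ + ‖b - z‖ = ‖b - a‖ ∧ z ≠ a ∧ z ≠ b}


set_option linter.unusedSectionVars false

lemma gauss_irr {α : ℝ} (hα : Irrational α) (hα1 : α ∈ Set.Ioo (0:ℝ) 1) :
    ∀ n, Irrational (gaussIter α n) ∧ gaussIter α n ∈ Set.Ioo (0:ℝ) 1 := by
  intro n
  induction n with
  | zero =>
    have h0 : Int.fract α = α := by
      rw [Int.fract_eq_self]; exact ⟨le_of_lt hα1.1, hα1.2⟩
    exact ⟨by rw [gaussIter, h0]; exact hα, by rw [gaussIter, h0]; exact hα1⟩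
  | succ n ih =>
    obtain ⟨hi, h01⟩ := ih
    have hinv : Irrational (gaussIter α n)⁻¹ := hi.inv
    have hfr : Irrational (Int.fract (gaussIter α n)⁻¹) := by
      have := hinv.sub_intCast ⌊(gaussIter α n)⁻¹⌋
      rwa [Int.self_sub_floor] at this
    have hpos : 0 < Int.fract (gaussIter α n)⁻¹ := by
      rcases (Int.fract_nonneg ((gaussIter α n)⁻¹)).lt_or_eq with h | h
      · exact h
      · exact absurd (h.symm) (hfr.ne_int 0 |> fun hh => by simpa using hh)
    refine ⟨by rw [gaussIter]; exact hfr, ?_, ?_⟩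
    · rw [gaussIter]; exact hpos
    · rw [gaussIter]; exact Int.fract_lt_one _


/-- numerators -/
noncomputable def cfP (α : ℝ) : ℕ → ℤ
  | 0 => 0
  | 1 => 1
  | n+2 => cfA α (n+2) * cfP α (n+1) + cfP α n

/-- product of gauss iterates -/
noncomputable def cfT (α : ℝ) : ℕ → ℝ
  | 0 => gaussIter α 0
  | n+1 => cfT α n * gaussIter α (n+1)

section main
variable {α : ℝ} (hα : Irrational α) (hα1 : α ∈ Set.Ioo (0:ℝ) 1)
include hα hα1

lemma gauss_key (n : ℕ) :
    (gaussIter α n)⁻¹ = (cfA α (n+1) : ℝ) + gaussIter α (n+1) ∧ 1 ≤ cfA α (n+1) := by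
  obtain ⟨hi, h0, h1⟩ := gauss_irr hα hα1 n
  have hgt : 1 < (gaussIter α n)⁻¹ := (one_lt_inv₀ h0).mpr h1
  have hfl : 1 ≤ ⌊(gaussIter α n)⁻¹⌋ := by
    rw [Int.le_floor]; exact_mod_cast hgt.le
  constructor
  · rw [gaussIter, cfA]
    have h2 : ((⌊(gaussIter α n)⁻¹⌋).toNat : ℤ) = ⌊(gaussIter α n)⁻¹⌋ :=
      Int.toNat_of_nonneg (by omega)
    have : ((⌊(gaussIter α n)⁻¹⌋).toNat : ℝ) = (⌊(gaussIter α n)⁻¹⌋ : ℝ) := by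
      exact_mod_cast congrArg (Int.cast : ℤ → ℝ) h2
    rw [this, Int.fract]
    ring
  · rw [cfA]; omega

lemma cfT_pos (n : ℕ) : 0 < cfT α n ∧ cfT α n < 1 := by
  induction n with
  | zero =>
    obtain ⟨_, h0, h1⟩ := gauss_irr hα hα1 0
    exact ⟨h0, h1⟩
  | succ n ih =>
    obtain ⟨_, h0, h1⟩ := gauss_irr hα hα1 (n+1)
    constructor
    · rw [cfT]; exact mul_pos ih.1 h0
    · rw [cfT]
      calc cfT α n * gaussIter α (n+1) < 1 * 1 := by
            apply mul_lt_mul' ih.2.le h1 h0.le one_pos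
        _ = 1 := by ring

lemma cfQ_pos (n : ℕ) : 1 ≤ cfQ α n := by
  induction n using Nat.strong_induction_on with
  | _ n ih =>
    match n with
    | 0 => simp [cfQ]
    | 1 => rw [cfQ]; exact (gauss_key hα hα1 0).2
    | (n+2) =>
      rw [cfQ]
      have h1 := (gauss_key hα hα1 (n+1)).2
      have h2 := ih (n+1) (by omega)
      calc 1 = 1 * 1 := by ring
        _ ≤ cfA α (n+2) * cfQ α (n+1) := Nat.mul_le_mul h1 h2
        _ ≤ _ := Nat.le_add_right _ _

lemma cfQ_mono (n : ℕ) : cfQ α n ≤ cfQ α (n+1) := by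
  match n with
  | 0 => rw [cfQ, cfQ]; exact (gauss_key hα hα1 0).2
  | (n+1) =>
    rw [cfQ]
    have h1 := (gauss_key hα hα1 (n+1)).2
    calc cfQ α (n+1) = 1 * cfQ α (n+1) := by ring
      _ ≤ cfA α (n+2) * cfQ α (n+1) := Nat.mul_le_mul_right _ h1
      _ ≤ _ := Nat.le_add_right _ _

lemma cfD (n : ℕ) :
    ((cfQ α n : ℝ) * α - cfP α n = (-1)^n * cfT α n) ∧
    ((cfQ α (n+1) : ℝ) * α - cfP α (n+1) = (-1)^(n+1) * cfT α (n+1)) := by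
  have hfr : gaussIter α 0 = α := by
    rw [gaussIter, Int.fract_eq_self]; exact ⟨hα1.1.le, hα1.2⟩
  induction n with
  | zero =>
    have hk := (gauss_key hα hα1 0).1
    rw [hfr] at hk
    have hαne : α ≠ 0 := ne_of_gt hα1.1
    have hk' : 1 = α * ((cfA α 1 : ℝ) + gaussIter α 1) := by
      rw [← hk]; field_simp
    constructor
    · show (cfQ α 0 : ℝ) * α - cfP α 0 = (-1)^0 * cfT α 0
      rw [cfQ, cfP, cfT, hfr]; push_cast; ring
    · show (cfQ α 1 : ℝ) * α - cfP α 1 = (-1)^1 * cfT α 1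
      rw [cfQ, cfP, cfT, cfT, hfr]
      push_cast
      linear_combination -hk'
  | succ n ih =>
    obtain ⟨h1, h2⟩ := ih
    refine ⟨h2, ?_⟩
    have hk := (gauss_key hα hα1 (n+1)).1
    obtain ⟨_, ht0, _⟩ := gauss_irr hα hα1 (n+1)
    have hk' : 1 = gaussIter α (n+1) * ((cfA α (n+2) : ℝ) + gaussIter α (n+2)) := by
      rw [← hk]; field_simp
    show (cfQ α (n+2) : ℝ) * α - cfP α (n+2) = (-1)^(n+2) * cfT α (n+2)
    rw [cfQ, cfP]
    rw [show cfT α (n+2) = cfT α n * gaussIter α (n+1) * gaussIter α (n+2) from by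
      rw [cfT, cfT]]
    push_cast
    rw [show cfT α (n+1) = cfT α n * gaussIter α (n+1) from by rw [cfT]] at h2
    linear_combination (cfA α (n+2) : ℝ) * h2 + h1 + (-1:ℝ)^n * cfT α n * hk'

lemma cfQT (n : ℕ) : (cfQ α (n+1) : ℝ) * cfT α n + (cfQ α n : ℝ) * cfT α (n+1) = 1 := by
  have hfr : gaussIter α 0 = α := by
    rw [gaussIter, Int.fract_eq_self]; exact ⟨hα1.1.le, hα1.2⟩
  induction n with
  | zero =>
    have hk := (gauss_key hα hα1 0).1
    rw [hfr] at hk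
    have hαne : α ≠ 0 := ne_of_gt hα1.1
    have hk' : 1 = α * ((cfA α 1 : ℝ) + gaussIter α 1) := by rw [← hk]; field_simp
    simp only [cfQ, cfT, hfr]
    push_cast
    linear_combination -hk'
  | succ n ih =>
    have hk := (gauss_key hα hα1 (n+1)).1
    obtain ⟨_, ht0, _⟩ := gauss_irr hα hα1 (n+1)
    have hk' : 1 = gaussIter α (n+1) * ((cfA α (n+2) : ℝ) + gaussIter α (n+2)) := by
      rw [← hk]; field_simp
    rw [cfQ]
    rw [show cfT α (n+2) = cfT α n * gaussIter α (n+1) * gaussIter α (n+2) from by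
      rw [cfT, cfT]]
    rw [show cfT α (n+1) = cfT α n * gaussIter α (n+1) from by rw [cfT]] at ih ⊢
    push_cast
    linear_combination ih - (cfQ α (n+1) : ℝ) * cfT α n * hk'

lemma cfT_lt (n : ℕ) : (cfQ α (n+1) : ℝ) * cfT α n < 1 := by
  have h := cfQT hα hα1 n
  have hT := cfT_pos hα hα1 (n+1)
  have hq : (1:ℝ) ≤ (cfQ α n : ℝ) := by exact_mod_cast cfQ_pos hα hα1 n
  nlinarith [hT.1]

lemma cfT_gt (n : ℕ) : 1 < ((cfQ α n : ℝ) + (cfQ α (n+1) : ℝ)) * cfT α n := by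
  have h := cfQT hα hα1 n
  have hT := cfT_pos hα hα1 n
  have hTT : cfT α (n+1) < cfT α n := by
    rw [cfT]
    obtain ⟨_, h0, h1⟩ := gauss_irr hα hα1 (n+1)
    nlinarith [hT.1]
  have hq : (1:ℝ) ≤ (cfQ α n : ℝ) := by exact_mod_cast cfQ_pos hα hα1 n
  nlinarith

lemma cfDet (n : ℕ) :
    cfP α (n+1) * (cfQ α n : ℤ) - cfP α n * (cfQ α (n+1) : ℤ) = (-1)^n := by
  induction n with
  | zero => simp [cfP, cfQ]
  | succ n ih =>
    rw [show cfP α (n+2) = cfA α (n+2) * cfP α (n+1) + cfP α n from by rw [cfP],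
        show cfQ α (n+2) = cfA α (n+2) * cfQ α (n+1) + cfQ α n from by rw [cfQ]]
    push_cast
    linear_combination (-1 : ℤ) * ih

lemma best_approx (n : ℕ) (p q : ℤ) (hq1 : 1 ≤ q) (hq2 : q < (cfQ α (n+1) : ℤ)) :
    cfT α n ≤ |(q : ℝ) * α - p| := by
  have det := cfDet hα hα1 n
  have hs : ((-1:ℤ)^n) * ((-1)^n) = 1 := by
    rw [← pow_add]
    exact Even.neg_one_pow ⟨n, by ring⟩
  set u : ℤ := (-1)^n * (q * cfP α (n+1) - p * (cfQ α (n+1) : ℤ)) with hu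
  set v : ℤ := (-1)^n * (p * (cfQ α n : ℤ) - q * cfP α n) with hv
  have hq : q = u * (cfQ α n : ℤ) + v * (cfQ α (n+1) : ℤ) := by
    rw [hu, hv]
    linear_combination (-(-1:ℤ)^n * q) * det - q * hs
  have hp : p = u * cfP α n + v * cfP α (n+1) := by
    rw [hu, hv]
    linear_combination (-(-1:ℤ)^n * p) * det - p * hs
  have hD0 := (cfD hα hα1 n).1
  have hD1 := (cfD hα hα1 n).2
  have key : (q : ℝ) * α - p = (u : ℝ) * ((-1)^n * cfT α n) + (v : ℝ) * ((-1)^(n+1) * cfT α (n+1)) := by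
    rw [← hD0, ← hD1]
    have hq' : (q : ℝ) = (u : ℝ) * (cfQ α n : ℝ) + (v : ℝ) * (cfQ α (n+1) : ℝ) := by
      exact_mod_cast congrArg (Int.cast : ℤ → ℝ) hq
    have hp' : (p : ℝ) = (u : ℝ) * (cfP α n : ℝ) + (v : ℝ) * (cfP α (n+1) : ℝ) := by
      exact_mod_cast congrArg (Int.cast : ℤ → ℝ) hp
    rw [hq', hp']; ring
  have hT0 := cfT_pos hα hα1 n
  have hT1 := cfT_pos hα hα1 (n+1)
  have hQ0 : (1:ℤ) ≤ (cfQ α n : ℤ) := by exact_mod_cast cfQ_pos hα hα1 n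
  have hQ1 : (1:ℤ) ≤ (cfQ α (n+1) : ℤ) := by exact_mod_cast cfQ_pos hα hα1 (n+1)
  by_cases hv0 : v = 0
  · -- q = u * q_n, so u ≥ 1
    rw [hv0] at hq
    simp at hq
    have hu1 : 1 ≤ u := by nlinarith
    have : (q:ℝ)*α - p = (u:ℝ) * ((-1)^n * cfT α n) := by rw [key, hv0]; push_cast; ring
    rw [this, abs_mul, abs_mul, abs_pow, abs_neg, abs_one, one_pow, one_mul,
      abs_of_pos hT0.1]
    have : (1:ℝ) ≤ |(u:ℝ)| := by
      rw [abs_of_pos (by exact_mod_cast hu1 : (0:ℝ) < (u:ℝ))]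
      exact_mod_cast hu1
    nlinarith
  · by_cases hu0 : u = 0
    · rw [hu0] at hq; simp at hq
      exfalso
      rcases le_or_gt 1 v with h | h
      · nlinarith
      · have : v ≤ 0 := by omega
        nlinarith
    · -- u, v nonzero with opposite signs
      have hop : u * v < 0 := by
        rcases lt_trichotomy u 0 with h | h | h
        · rcases lt_trichotomy v 0 with h' | h' | h'
          · exfalso; nlinarith
          · exact absurd h' hv0
          · exact mul_neg_of_neg_of_pos h h'
        · exact absurd h hu0
        · rcases lt_trichotomy v 0 with h' | h' | h'
          · exact mul_neg_of_pos_of_neg h h'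
          · exact absurd h' hv0
          · exfalso; nlinarith
      -- x = u * D_n, y = v * D_{n+1} have the same sign
      set x : ℝ := (u : ℝ) * ((-1)^n * cfT α n) with hx
      set y : ℝ := (v : ℝ) * ((-1)^(n+1) * cfT α (n+1)) with hy
      have hxy : 0 < x * y := by
        rw [hx, hy]
        have : (u:ℝ) * ((-1)^n * cfT α n) * ((v:ℝ) * ((-1)^(n+1) * cfT α (n+1)))
            = (-((u:ℝ)*(v:ℝ))) * (((-1:ℝ)^n*(-1)^n) * (cfT α n * cfT α (n+1))) := by ring
        rw [this]
        have hs' : ((-1:ℝ)^n) * ((-1)^n) = 1 := by exact_mod_cast congrArg (Int.cast : ℤ → ℝ) hs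
        rw [hs', one_mul]
        have huv : (0:ℝ) < -((u:ℝ)*(v:ℝ)) := by
          have : ((u*v : ℤ) : ℝ) < 0 := by exact_mod_cast hop
          push_cast at this; linarith
        exact mul_pos huv (mul_pos hT0.1 hT1.1)
      have habs : |x| ≤ |x + y| := by
        rcases mul_pos_iff.mp hxy with ⟨h1, h2⟩ | ⟨h1, h2⟩
        · rw [abs_of_pos h1, abs_of_pos (by linarith)]; linarith
        · rw [abs_of_neg h1, abs_of_neg (by linarith)]; linarith
      have hxval : cfT α n ≤ |x| := by
        rw [hx, abs_mul, abs_mul, abs_pow, abs_neg, abs_one, one_pow, one_mul,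
          abs_of_pos hT0.1]
        have : (1:ℝ) ≤ |(u:ℝ)| := by
          have := Int.one_le_abs hu0
          calc (1:ℝ) ≤ (|u| : ℤ) := by exact_mod_cast this
            _ = |(u:ℝ)| := by push_cast; ring
        nlinarith
      calc cfT α n ≤ |x| := hxval
        _ ≤ |x + y| := habs
        _ = |(q:ℝ)*α - p| := by rw [← key]


end main

lemma round_min (x : ℝ) (m : ℤ) : |x - round x| ≤ |x - m| := by
  by_contra h
  push_neg at h
  have h2 : |x - round x| ≤ 1/2 := abs_sub_round x
  have h3 : |((round x : ℝ)) - m| < 1 := by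
    calc |((round x : ℝ)) - m| ≤ |round x - x| + |x - m| := by
          have := abs_sub_le ((round x : ℝ)) x m; linarith [this]
      _ = |x - round x| + |x - m| := by rw [abs_sub_comm]
      _ < 1 := by linarith
  have h4 : ((round x - m : ℤ) : ℝ) = (round x : ℝ) - m := by push_cast; ring
  have h5 : |round x - m| < 1 := by
    have : |((round x - m : ℤ) : ℝ)| < 1 := by rw [h4]; exact h3
    exact_mod_cast this
  have h6 : round x = m := by
    have := Int.abs_lt_one_iff.mp h5
    omega
  rw [h6] at h
  linarith

lemma norm_circ (x : ℝ) : ‖(x : AddCircle (1:ℝ))‖ = |x - round x| :=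
  UnitAddCircle.norm_eq

lemma norm_circ_le (x : ℝ) (m : ℤ) : ‖(x : AddCircle (1:ℝ))‖ ≤ |x - m| := by
  rw [norm_circ]; exact round_min x m

lemma norm_circ_eq (x : ℝ) (h : |x| ≤ 1/2) : ‖(x : AddCircle (1:ℝ))‖ = |x| := by
  rw [AddCircle.norm_coe_eq_abs_iff (p := (1:ℝ)) one_ne_zero]
  simpa using h

lemma int_coe_circ (m : ℤ) : (((m : ℝ)) : AddCircle (1:ℝ)) = 0 := by
  rw [AddCircle.coe_eq_zero_iff]
  exact ⟨m, by simp⟩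

lemma norm_circ_le_abs (x : ℝ) : ‖(x : AddCircle (1:ℝ))‖ ≤ |x| := by
  simpa using norm_circ_le x 0

lemma mem_arc {x δ y : ℝ} (hδ2 : δ < 1/2) (h1 : x < y) (h2 : y < x + δ) :
    ((y : ℝ) : AddCircle (1:ℝ)) ∈ arcO ((x:ℝ) : AddCircle (1:ℝ)) ((x + δ : ℝ) : AddCircle (1:ℝ)) := by
  have e1 : ((y : ℝ) : AddCircle (1:ℝ)) - ((x:ℝ) : AddCircle (1:ℝ)) = ((y - x : ℝ) : AddCircle (1:ℝ)) := by
    rw [AddCircle.coe_sub]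
  have e2 : ((x + δ : ℝ) : AddCircle (1:ℝ)) - ((y:ℝ) : AddCircle (1:ℝ)) = ((x + δ - y : ℝ) : AddCircle (1:ℝ)) := by
    rw [AddCircle.coe_sub]
  have e3 : ((x + δ : ℝ) : AddCircle (1:ℝ)) - ((x:ℝ) : AddCircle (1:ℝ)) = ((δ : ℝ) : AddCircle (1:ℝ)) := by
    rw [← AddCircle.coe_sub]; norm_num
  have n1 : ‖((y - x : ℝ) : AddCircle (1:ℝ))‖ = y - x := by
    rw [norm_circ_eq _ (by rw [abs_of_pos (by linarith)]; linarith),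
      abs_of_pos (by linarith : (0:ℝ) < y - x)]
  have n2 : ‖((x + δ - y : ℝ) : AddCircle (1:ℝ))‖ = x + δ - y := by
    rw [norm_circ_eq _ (by rw [abs_of_pos (by linarith)]; linarith),
      abs_of_pos (by linarith : (0:ℝ) < x + δ - y)]
  have n3 : ‖((δ : ℝ) : AddCircle (1:ℝ))‖ = δ := by
    rw [norm_circ_eq _ (by rw [abs_of_pos (by linarith)]; linarith),
      abs_of_pos (by linarith : (0:ℝ) < δ)]
  refine ⟨by rw [e1, e2, e3, n1, n2, n3]; ring, ?_, ?_⟩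
  · intro h
    have : ((y : ℝ) : AddCircle (1:ℝ)) - ((x:ℝ) : AddCircle (1:ℝ)) = 0 := by rw [h]; abel
    rw [e1] at this
    have := congrArg norm this
    rw [n1, norm_zero] at this
    linarith
  · intro h
    have : ((x + δ : ℝ) : AddCircle (1:ℝ)) - ((y:ℝ) : AddCircle (1:ℝ)) = 0 := by rw [h]; abel
    rw [e2] at this
    have := congrArg norm this
    rw [n2, norm_zero] at this
    linarith

lemma arc_norm_le {a b z : AddCircle (1:ℝ)} (hz : z ∈ arcO a b) : ‖z‖ ≤ ‖b - a‖ + ‖a‖ := by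
  obtain ⟨heq, _, _⟩ := hz
  have h1 : ‖z - a‖ ≤ ‖b - a‖ := by
    have := norm_nonneg (b - z); linarith
  calc ‖z‖ = ‖(z - a) + a‖ := by rw [sub_add_cancel]
    _ ≤ ‖z - a‖ + ‖a‖ := norm_add_le _ _
    _ ≤ ‖b - a‖ + ‖a‖ := by linarith

set_option maxHeartbeats 1000000 in
/-- If `q_{n+1}/q_n > 4/η³` with `0 < η < 1/50`, `δ = η²/q_n` and
`x ∈ I = [−η³/q_n, −2/q_{n+1}] ⊂ 𝕋`, then the set of `i ∈ {−q_n, …, 2q_n}` with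
`iα ∈ (x, x+δ)` is exactly `{−q_n, 0, q_n, 2q_n}`. -/
theorem stmt13 (α : ℝ) (hα : Irrational α) (hα1 : α ∈ Set.Ioo (0:ℝ) 1)
    (η : ℝ) (hη : η ∈ Set.Ioo (0:ℝ) (1/50)) (n : ℕ)
    (hratio : (4:ℝ) / η^3 < (cfQ α (n+1) : ℝ) / (cfQ α n : ℝ))
    (ξ : ℝ) (hξ : ξ ∈ Set.Icc (-(η^3) / (cfQ α n : ℝ)) (-(2:ℝ) / (cfQ α (n+1) : ℝ))) :
    {i : ℤ | i ∈ Set.Icc (-(cfQ α n : ℤ)) (2 * (cfQ α n : ℤ)) ∧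
        (((i : ℝ) * α : ℝ) : AddCircle (1:ℝ)) ∈
          arcO ((ξ : ℝ) : AddCircle (1:ℝ)) ((ξ + η^2 / (cfQ α n : ℝ) : ℝ) : AddCircle (1:ℝ))} =
      {-(cfQ α n : ℤ), 0, (cfQ α n : ℤ), 2 * (cfQ α n : ℤ)} := by
  obtain ⟨hη0, hη50⟩ := hη
  obtain ⟨hξ1, hξ2⟩ := hξ
  have hQ1 : (1:ℝ) ≤ (cfQ α n : ℝ) := by exact_mod_cast cfQ_pos hα hα1 n
  have hQ'1 : (1:ℝ) ≤ (cfQ α (n+1) : ℝ) := by exact_mod_cast cfQ_pos hα hα1 (n+1)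
  have hQ0 : (0:ℝ) < (cfQ α n : ℝ) := by linarith
  have hQ'0 : (0:ℝ) < (cfQ α (n+1) : ℝ) := by linarith
  have hbig : 4 * (cfQ α n : ℝ) < η^3 * (cfQ α (n+1) : ℝ) := by
    have h3 : (0:ℝ) < η^3 := by positivity
    rw [div_lt_div_iff₀ h3 hQ0] at hratio
    linarith
  have hT0 := cfT_pos hα hα1 n
  have hTlt : (cfQ α (n+1) : ℝ) * cfT α n < 1 := cfT_lt hα hα1 n
  have hD := (cfD hα hα1 n).1
  have hDabs : |(cfQ α n : ℝ) * α - cfP α n| = cfT α n := by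
    rw [hD, abs_mul, abs_pow, abs_neg, abs_one, one_pow, one_mul, abs_of_pos hT0.1]
  have hδ0 : (0:ℝ) < η^2 / (cfQ α n : ℝ) := by positivity
  have hδhalf : η^2 / (cfQ α n : ℝ) < 1/2 := by
    rw [div_lt_iff₀ hQ0]; nlinarith
  have hδQ : (η^2 / (cfQ α n : ℝ)) * (cfQ α n : ℝ) = η^2 := by field_simp
  have hξ2' : ξ * (cfQ α (n+1) : ℝ) ≤ -2 := (le_div_iff₀ hQ'0).mp hξ2
  have hξ1' : -(η^3) ≤ ξ * (cfQ α n : ℝ) := (div_le_iff₀ hQ0).mp hξ1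
  have hξneg : ξ < 0 := by nlinarith
  have hTη : 4 * (cfQ α n : ℝ) * cfT α n < η^3 := by
    nlinarith [hT0.1, mul_pos hQ0 hT0.1]
  -- the four multiples of q_n lie in the arc
  have harcmem : ∀ i j : ℤ, i = j * (cfQ α n : ℤ) → -1 ≤ j → j ≤ 2 →
      (((i : ℝ) * α : ℝ) : AddCircle (1:ℝ)) ∈
        arcO ((ξ : ℝ) : AddCircle (1:ℝ)) ((ξ + η^2 / (cfQ α n : ℝ) : ℝ) : AddCircle (1:ℝ)) := by
    intro i j hij hj1 hj2
    have hiR : (i:ℝ) = (j:ℝ) * (cfQ α n : ℝ) := by exact_mod_cast congrArg (Int.cast : ℤ → ℝ) hij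
    have hre : (i:ℝ) * α = (j:ℝ) * ((cfQ α n : ℝ) * α - cfP α n) + ((j * cfP α n : ℤ) : ℝ) := by
      rw [hiR]; push_cast; ring
    have hcoe : (((i:ℝ) * α : ℝ) : AddCircle (1:ℝ))
        = (((j:ℝ) * ((cfQ α n : ℝ) * α - cfP α n) : ℝ) : AddCircle (1:ℝ)) := by
      rw [hre, AddCircle.coe_add, int_coe_circ, add_zero]
    rw [hcoe]
    have hjabs : |(j:ℝ)| ≤ 2 := by
      rw [abs_le]; constructor
      · exact_mod_cast (by omega : (-2:ℤ) ≤ j)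
      · exact_mod_cast hj2
    have hjD : |(j:ℝ) * ((cfQ α n : ℝ) * α - cfP α n)| ≤ 2 * cfT α n := by
      rw [abs_mul, hDabs]
      nlinarith [hT0.1, abs_nonneg (j:ℝ)]
    have hleft : ξ + 2 * cfT α n < 0 := by
      by_contra hc
      push_neg at hc
      have h0 := mul_nonneg (le_of_lt hQ'0) hc
      nlinarith [hξ2', hTlt]
    have hright : 2 * cfT α n < ξ + η^2 / (cfQ α n : ℝ) := by
      have hmul : 2 * cfT α n * (cfQ α n : ℝ)
          < (ξ + η^2 / (cfQ α n : ℝ)) * (cfQ α n : ℝ) := by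
        have hcube : (0:ℝ) < η * η * (2 - 3*η) :=
          mul_pos (mul_pos hη0 hη0) (by linarith)
        nlinarith [hTη, hξ1', hδQ]
      exact lt_of_mul_lt_mul_right hmul hQ0.le
    apply mem_arc hδhalf
    · linarith [neg_abs_le ((j:ℝ) * ((cfQ α n : ℝ) * α - cfP α n)), hjD]
    · linarith [le_abs_self ((j:ℝ) * ((cfQ α n : ℝ) * α - cfP α n)), hjD]
  ext i
  simp only [Set.mem_setOf_eq, Set.mem_Icc, Set.mem_insert_iff, Set.mem_singleton_iff]
  constructor
  · rintro ⟨⟨hi1, hi2⟩, hmem⟩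
    have hQZ : (1:ℤ) ≤ (cfQ α n : ℤ) := by exact_mod_cast cfQ_pos hα hα1 n
    have hdiv : i = (cfQ α n : ℤ) * (i / (cfQ α n : ℤ)) + i % (cfQ α n : ℤ) :=
      (Int.mul_ediv_add_emod i (cfQ α n : ℤ)).symm
    have hr0 : 0 ≤ i % (cfQ α n : ℤ) := Int.emod_nonneg i (by omega)
    have hrQ : i % (cfQ α n : ℤ) < (cfQ α n : ℤ) := Int.emod_lt_of_pos i (by omega)
    by_cases hr : i % (cfQ α n : ℤ) = 0
    · rw [hr, add_zero] at hdiv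
      have hm1 : -1 ≤ i / (cfQ α n : ℤ) := by
        by_contra h
        push_neg at h
        have h2 : i / (cfQ α n : ℤ) ≤ -2 := by omega
        have := mul_le_mul_of_nonneg_left h2 (by omega : (0:ℤ) ≤ (cfQ α n : ℤ))
        linarith
      have hm2 : i / (cfQ α n : ℤ) ≤ 2 := by
        by_contra h
        push_neg at h
        have h2 : 3 ≤ i / (cfQ α n : ℤ) := by omega
        have := mul_le_mul_of_nonneg_left h2 (by omega : (0:ℤ) ≤ (cfQ α n : ℤ))
        linarith
      interval_cases i / (cfQ α n : ℤ) <;> omega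
    · exfalso
      have hr1 : 1 ≤ i % (cfQ α n : ℤ) := by omega
      -- bounds on m
      have hm1 : -1 ≤ i / (cfQ α n : ℤ) := by
        by_contra h
        push_neg at h
        have h2 : i / (cfQ α n : ℤ) ≤ -2 := by omega
        have := mul_le_mul_of_nonneg_left h2 (by omega : (0:ℤ) ≤ (cfQ α n : ℤ))
        linarith
      have hm2 : i / (cfQ α n : ℤ) ≤ 1 := by
        by_contra h
        push_neg at h
        have h2 : 2 ≤ i / (cfQ α n : ℤ) := by omega
        have := mul_le_mul_of_nonneg_left h2 (by omega : (0:ℤ) ≤ (cfQ α n : ℤ))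
        linarith
      -- n ≥ 1
      have hn1 : 1 ≤ n := by
        by_contra h
        have hn0 : n = 0 := by omega
        have : cfQ α n = 1 := by rw [hn0, cfQ]
        omega
      obtain ⟨k, hk⟩ : ∃ k, k + 1 = n := ⟨n - 1, by omega⟩
      -- upper bound on the norm from arc membership
      have hnormle : ‖(((i:ℝ) * α : ℝ) : AddCircle (1:ℝ))‖ ≤ η^2 / (cfQ α n : ℝ) + η^3 / (cfQ α n : ℝ) := by
        have h := arc_norm_le hmem
        have hba : ‖((ξ + η^2 / (cfQ α n : ℝ) : ℝ) : AddCircle (1:ℝ)) - ((ξ:ℝ) : AddCircle (1:ℝ))‖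
            ≤ η^2 / (cfQ α n : ℝ) := by
          rw [← AddCircle.coe_sub]
          refine le_trans (norm_circ_le_abs _) ?_
          rw [show ξ + η^2 / (cfQ α n : ℝ) - ξ = η^2 / (cfQ α n : ℝ) from by ring,
            abs_of_pos hδ0]
        have ha : ‖((ξ:ℝ) : AddCircle (1:ℝ))‖ ≤ η^3 / (cfQ α n : ℝ) := by
          refine le_trans (norm_circ_le_abs _) ?_
          rw [abs_of_neg hξneg, le_div_iff₀ hQ0]
          linarith
        linarith
      -- lower bound on the norm
      have hb := best_approx hα hα1 k (round ((((i % (cfQ α n : ℤ)) : ℤ):ℝ) * α)) (i % (cfQ α n : ℤ))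
        (by omega) (by rw [hk]; exact_mod_cast hrQ)
      have hrnorm : cfT α k ≤ ‖(((((i % (cfQ α n : ℤ)) : ℤ):ℝ) * α : ℝ) : AddCircle (1:ℝ))‖ := by
        rw [norm_circ]; exact hb
      have hgt := cfT_gt hα hα1 k
      rw [hk] at hgt
      have hmono : (cfQ α k : ℝ) ≤ (cfQ α n : ℝ) := by
        have := cfQ_mono hα hα1 k
        rw [hk] at this
        exact_mod_cast this
      have hTk0 := cfT_pos hα hα1 k
      -- decomposition
      have hiR : (i:ℝ) = (cfQ α n : ℝ) * ((i / (cfQ α n : ℤ) : ℤ):ℝ) + (((i % (cfQ α n : ℤ)) : ℤ):ℝ) := by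
        exact_mod_cast congrArg (Int.cast : ℤ → ℝ) hdiv
      have hre : (i:ℝ) * α = (((i % (cfQ α n : ℤ)) : ℤ):ℝ) * α
          + ((i / (cfQ α n : ℤ) : ℤ):ℝ) * ((cfQ α n : ℝ) * α - cfP α n)
          + (((i / (cfQ α n : ℤ)) * cfP α n : ℤ) : ℝ) := by
        rw [hiR]; push_cast; ring
      have hcoe : (((i:ℝ) * α : ℝ) : AddCircle (1:ℝ))
          = (((((i % (cfQ α n : ℤ)) : ℤ):ℝ) * α
            + ((i / (cfQ α n : ℤ) : ℤ):ℝ) * ((cfQ α n : ℝ) * α - cfP α n) : ℝ) : AddCircle (1:ℝ)) := by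
        rw [hre, AddCircle.coe_add, int_coe_circ, add_zero]
      -- bound ‖m·D‖ ≤ T
      have hmabs : |((i / (cfQ α n : ℤ) : ℤ):ℝ)| ≤ 1 := by
        rw [abs_le]; constructor
        · exact_mod_cast hm1
        · exact_mod_cast hm2
      have hmD : ‖((-(((i / (cfQ α n : ℤ) : ℤ):ℝ) * ((cfQ α n : ℝ) * α - cfP α n)) : ℝ) : AddCircle (1:ℝ))‖
          ≤ cfT α n := by
        refine le_trans (norm_circ_le_abs _) ?_
        rw [abs_neg, abs_mul, hDabs]
        nlinarith [hT0.1, abs_nonneg ((i / (cfQ α n : ℤ) : ℤ):ℝ)]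
      have htri : cfT α k - cfT α n ≤ ‖(((i:ℝ) * α : ℝ) : AddCircle (1:ℝ))‖ := by
        have h := norm_sub_norm_le ((((((i % (cfQ α n : ℤ)) : ℤ):ℝ) * α : ℝ)) : AddCircle (1:ℝ))
          (((-(((i / (cfQ α n : ℤ) : ℤ):ℝ) * ((cfQ α n : ℝ) * α - cfP α n)) : ℝ)) : AddCircle (1:ℝ))
        rw [← AddCircle.coe_sub] at h
        have e : ((((i % (cfQ α n : ℤ)) : ℤ):ℝ) * α
            - -(((i / (cfQ α n : ℤ) : ℤ):ℝ) * ((cfQ α n : ℝ) * α - cfP α n)))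
            = ((((i % (cfQ α n : ℤ)) : ℤ):ℝ) * α
            + ((i / (cfQ α n : ℤ) : ℤ):ℝ) * ((cfQ α n : ℝ) * α - cfP α n)) := by ring
        rw [e, ← hcoe] at h
        linarith [hrnorm, hmD, h]
      -- final numeric contradiction
      have hcomb : cfT α k ≤ η^2 / (cfQ α n : ℝ) + η^3 / (cfQ α n : ℝ) + cfT α n := by
        linarith
      have hq3 : (η^3 / (cfQ α n : ℝ)) * (cfQ α n : ℝ) = η^3 := by field_simp
      have hmul := mul_le_mul_of_nonneg_right hcomb (le_of_lt hQ0)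
      nlinarith [hgt, hTη, hδQ, hq3, hmul, hT0.1, hTk0.1, hQ0, hη0, hη50,
        mul_pos hQ0 hTk0.1]
  · intro h
    have hQZ : (1:ℤ) ≤ (cfQ α n : ℤ) := by exact_mod_cast cfQ_pos hα hα1 n
    rcases h with h | h | h | h
    · exact ⟨⟨by omega, by omega⟩, harcmem i (-1) (by omega) (by omega) (by omega)⟩
    · exact ⟨⟨by omega, by omega⟩, harcmem i 0 (by omega) (by omega) (by omega)⟩
    · exact ⟨⟨by omega, by omega⟩, harcmem i 1 (by omega) (by omega) (by omega)⟩
    · exact ⟨⟨by omega, by omega⟩, harcmem i 2 (by omega) (by omega) (by omega)⟩
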